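/- (No crossing of replica-symmetric Sherrington–Kirkpatrick characteristics.) Let b ∈ ℝ, t ≥ 0, and let I ⊆ (0,∞) be an interval such that for all x₀ ∈ I one has t · E_g[ cosh^{−4}( b + g √x₀ ) ] ≤ 1/3 + (2/3) · t · E_g[ cosh^{−2}( b + g √x₀ ) ]. Then the map f(x₀) = x₀ − t · E_g[ tanh²( b + g √x₀ ) ] is nondecreasing on I; in particular the replica-symmetric characteristic trajectories x = x₀ − t · E_g[ tanh²( b + g √x₀ ) ] starting from distinct points of I do not intersect at time t. -/

import Mathlib

open Real MeasureTheory ProbabilityTheory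
open scoped ENNReal NNReal

noncomputable def skP (g : ℝ) : ℝ := gaussianPDFReal 0 1 g

lemma skP_eq : skP = fun g : ℝ => (Real.sqrt (2 * π))⁻¹ * Real.exp (-(1/2) * g ^ 2) := by
  funext g
  unfold skP gaussianPDFReal
  push_cast
  congr 1
  · norm_num
  · congr 1
    ring

lemma skP_nonneg (g : ℝ) : 0 ≤ skP g := gaussianPDFReal_nonneg 0 1 g

lemma skP_hasDerivAt (g : ℝ) : HasDerivAt skP (-g * skP g) g := by
  rw [skP_eq]
  have h : HasDerivAt (fun g : ℝ => -(1/2) * g ^ 2) (-g) g := by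
    simpa using ((hasDerivAt_pow 2 g).const_mul (-(1/2) : ℝ))
  have := (h.exp).const_mul (Real.sqrt (2 * π))⁻¹
  refine this.congr_deriv ?_
  ring

lemma skP_integrable : Integrable skP := by
  rw [skP_eq]
  exact (integrable_exp_neg_mul_sq (by norm_num : (0:ℝ) < 1/2)).const_mul _

lemma skP_mul_integrable : Integrable (fun g => g * skP g) := by
  rw [skP_eq]
  have := (integrable_mul_exp_neg_mul_sq (by norm_num : (0:ℝ) < 1/2)).const_mul
    (Real.sqrt (2 * π))⁻¹
  convert this using 2 with g
  ring

lemma skP_abs_mul_integrable : Integrable (fun g => |g| * skP g) := by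
  have := skP_mul_integrable.abs
  refine this.congr ?_
  filter_upwards with g
  rw [abs_mul, abs_of_nonneg (skP_nonneg g)]

lemma gaussianReal_eq :
    gaussianReal 0 1 = volume.withDensity (fun x => ENNReal.ofReal (skP x)) := by
  rw [gaussianReal_of_var_ne_zero 0 one_ne_zero]
  rfl

lemma skP_measurable : Measurable skP := measurable_gaussianPDFReal 0 1

lemma sk_integral_eq (f : ℝ → ℝ) :
    ∫ g, f g ∂(gaussianReal 0 1) = ∫ g, f g * skP g := by
  rw [gaussianReal_eq]
  have hm : Measurable fun x => (skP x).toNNReal := skP_measurable.real_toNNReal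
  have : (fun x => ENNReal.ofReal (skP x)) = fun x => ((skP x).toNNReal : ℝ≥0∞) := rfl
  rw [this, integral_withDensity_eq_integral_smul hm f]
  congr 1
  funext x
  rw [NNReal.smul_def, smul_eq_mul, Real.coe_toNNReal _ (skP_nonneg x)]
  ring

lemma sk_integrable_abs : Integrable (fun g => |g|) (gaussianReal 0 1) := by
  rw [gaussianReal_eq, integrable_withDensity_iff (skP_measurable.ennreal_ofReal)
    (Filter.Eventually.of_forall fun x => ENNReal.ofReal_lt_top)]
  refine skP_abs_mul_integrable.congr ?_
  filter_upwards with g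
  rw [ENNReal.toReal_ofReal (skP_nonneg g)]

lemma sk_integrable_of_bound (f : ℝ → ℝ) (C : ℝ) (hf : Continuous f)
    (h : ∀ g, ‖f g‖ ≤ C) : Integrable f (gaussianReal 0 1) :=
  (integrable_const C).mono' hf.aestronglyMeasurable (Filter.Eventually.of_forall h)

lemma hasDerivAt_sech2 (u : ℝ) :
    HasDerivAt (fun u => ((Real.cosh u) ^ 2)⁻¹)
      (-2 * Real.sinh u / (Real.cosh u) ^ 3) u := by
  have h := ((Real.hasDerivAt_cosh u).pow 2).inv (pow_ne_zero _ (Real.cosh_pos u).ne')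
  refine h.congr_deriv ?_
  have hc := (Real.cosh_pos u).ne'
  simp only [Pi.pow_apply, Pi.neg_apply]
  field_simp
  ring

lemma hasDerivAt_msc3 (u : ℝ) :
    HasDerivAt (fun u => -Real.sinh u / (Real.cosh u) ^ 3)
      (2 * ((Real.cosh u) ^ 2)⁻¹ - 3 * ((Real.cosh u) ^ 4)⁻¹) u := by
  have h := ((Real.hasDerivAt_sinh u).neg.div ((Real.hasDerivAt_cosh u).pow 3) (pow_ne_zero _ (Real.cosh_pos u).ne'))
  refine h.congr_deriv ?_
  have hc := (Real.cosh_pos u).ne'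
  have hs : Real.sinh u ^ 2 = Real.cosh u ^ 2 - 1 := by
    have := Real.cosh_sq_sub_sinh_sq u
    nlinarith [this]
  simp only [Pi.pow_apply, Pi.neg_apply]
  field_simp
  linear_combination (3 * Real.cosh u ^ 2) * hs

lemma abs_sinh_le_cosh (u : ℝ) : |Real.sinh u| ≤ Real.cosh u := by
  rw [Real.abs_sinh, ← Real.cosh_abs u]
  exact (Real.sinh_lt_cosh _).le

lemma one_le_cosh_pow (u : ℝ) (n : ℕ) : 1 ≤ Real.cosh u ^ n :=
  one_le_pow₀ (Real.one_le_cosh u)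

lemma cont_sech (b c : ℝ) (n : ℕ) :
    Continuous fun g : ℝ => ((Real.cosh (b + g * c)) ^ n)⁻¹ := by
  apply Continuous.inv₀
  · fun_prop
  · intro g
    positivity

lemma sech_norm_le (u : ℝ) (n : ℕ) : ‖((Real.cosh u) ^ n)⁻¹‖ ≤ 1 := by
  rw [Real.norm_eq_abs, abs_of_pos (by positivity)]
  exact inv_le_one_of_one_le₀ (one_le_cosh_pow u n)

lemma sk_hasDerivAt (b x₀ : ℝ) (hx : 0 < x₀) :
    HasDerivAt
      (fun x => ∫ g, ((Real.cosh (b + g * Real.sqrt x)) ^ 2)⁻¹ ∂(gaussianReal 0 1))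
      (2 * (∫ g, ((Real.cosh (b + g * Real.sqrt x₀)) ^ 2)⁻¹ ∂(gaussianReal 0 1))
        - 3 * (∫ g, ((Real.cosh (b + g * Real.sqrt x₀)) ^ 4)⁻¹ ∂(gaussianReal 0 1))) x₀ := by
  have hsx : 0 < Real.sqrt x₀ := Real.sqrt_pos.2 hx
  set γ := gaussianReal 0 1 with hγ
  set F : ℝ → ℝ → ℝ := fun x g => ((Real.cosh (b + g * Real.sqrt x)) ^ 2)⁻¹ with hF
  set F' : ℝ → ℝ → ℝ := fun x g =>
    -2 * Real.sinh (b + g * Real.sqrt x) / (Real.cosh (b + g * Real.sqrt x)) ^ 3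
      * (g / (2 * Real.sqrt x)) with hF'
  have key := hasDerivAt_integral_of_dominated_loc_of_deriv_le (μ := γ) (x₀ := x₀)
      (F := F) (F' := F') (s := Metric.ball x₀ (x₀ / 2))
      (bound := fun g => |g| * (Real.sqrt (x₀ / 2))⁻¹)
      (Metric.ball_mem_nhds _ (by positivity))
      (Filter.Eventually.of_forall fun x => (cont_sech b (Real.sqrt x) 2).aestronglyMeasurable)
      (sk_integrable_of_bound _ 1 (cont_sech b (Real.sqrt x₀) 2) fun g => sech_norm_le _ 2)
      ?meas' ?bound ?bint ?diff
  case meas' =>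
    apply Continuous.aestronglyMeasurable
    apply Continuous.mul
    · apply Continuous.div
      · fun_prop
      · fun_prop
      · intro g
        positivity
    · fun_prop
  case bound =>
    refine Filter.Eventually.of_forall fun g => fun x hxball => ?_
    have hxgt : x₀ / 2 < x := by
      rw [Metric.mem_ball, Real.dist_eq, abs_lt] at hxball
      linarith [hxball.1]
    have hxpos : (0:ℝ) < x := lt_trans (by positivity) hxgt
    have hsq : Real.sqrt (x₀ / 2) ≤ Real.sqrt x := Real.sqrt_le_sqrt hxgt.le
    have hsq2 : 0 < Real.sqrt (x₀ / 2) := Real.sqrt_pos.2 (by positivity)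
    set s := b + g * Real.sqrt x with hs
    have h1 : ‖-2 * Real.sinh s / Real.cosh s ^ 3‖ ≤ 2 := by
      rw [Real.norm_eq_abs, abs_div, abs_mul]
      have hc3 : (0:ℝ) < Real.cosh s ^ 3 := by positivity
      rw [abs_of_pos hc3, div_le_iff₀ hc3]
      have : |Real.sinh s| ≤ Real.cosh s ^ 3 :=
        (abs_sinh_le_cosh s).trans (le_self_pow₀ (Real.one_le_cosh s) (by norm_num))
      calc |(-2 : ℝ)| * |Real.sinh s| ≤ 2 * Real.cosh s ^ 3 := by
            rw [abs_neg, abs_two]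
            exact mul_le_mul_of_nonneg_left this (by norm_num)
        _ = 2 * Real.cosh s ^ 3 := rfl
    have h2 : ‖g / (2 * Real.sqrt x)‖ ≤ |g| / (2 * Real.sqrt (x₀ / 2)) := by
      rw [Real.norm_eq_abs, abs_div, abs_of_pos (by positivity : (0:ℝ) < 2 * Real.sqrt x)]
      apply div_le_div_of_nonneg_left (abs_nonneg g) (by positivity)
      linarith
    calc ‖F' x g‖ = ‖-2 * Real.sinh s / Real.cosh s ^ 3‖ * ‖g / (2 * Real.sqrt x)‖ := by
          rw [hF', norm_mul]
      _ ≤ 2 * (|g| / (2 * Real.sqrt (x₀ / 2))) :=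
          mul_le_mul h1 h2 (norm_nonneg _) (by norm_num)
      _ = |g| * (Real.sqrt (x₀ / 2))⁻¹ := by
          field_simp
  case bint => exact sk_integrable_abs.mul_const _
  case diff =>
    refine Filter.Eventually.of_forall fun g => fun x hxball => ?_
    have hxgt : x₀ / 2 < x := by
      rw [Metric.mem_ball, Real.dist_eq, abs_lt] at hxball
      linarith [hxball.1]
    have hxpos : (0:ℝ) < x := lt_trans (by positivity) hxgt
    have hinner : HasDerivAt (fun x => b + g * Real.sqrt x) (g * (1 / (2 * Real.sqrt x))) x :=
      ((Real.hasDerivAt_sqrt hxpos.ne').const_mul g).const_add b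
    have := (hasDerivAt_sech2 (b + g * Real.sqrt x)).comp x hinner
    refine this.congr_deriv ?_
    simp only [hF']
    ring
  obtain ⟨hFi, hderiv⟩ := key
  have hval : (∫ g, F' x₀ g ∂γ)
      = 2 * (∫ g, ((Real.cosh (b + g * Real.sqrt x₀)) ^ 2)⁻¹ ∂γ)
        - 3 * (∫ g, ((Real.cosh (b + g * Real.sqrt x₀)) ^ 4)⁻¹ ∂γ) := by
    set s : ℝ → ℝ := fun g => b + g * Real.sqrt x₀ with hsdef
    set u : ℝ → ℝ := fun g => -Real.sinh (s g) / Real.cosh (s g) ^ 3 * (Real.sqrt x₀)⁻¹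
      with hu_def
    set u' : ℝ → ℝ := fun g => 2 * ((Real.cosh (s g)) ^ 2)⁻¹ - 3 * ((Real.cosh (s g)) ^ 4)⁻¹
      with hu'_def
    have hscont : Continuous s := by fun_prop
    have hu' : ∀ g, HasDerivAt u (u' g) g := by
      intro g
      have hsd : HasDerivAt s (Real.sqrt x₀) g := by
        simpa [hsdef] using ((hasDerivAt_id g).mul_const (Real.sqrt x₀)).const_add b
      have h := ((hasDerivAt_msc3 (s g)).comp g hsd).mul_const (Real.sqrt x₀)⁻¹
      refine h.congr_deriv ?_
      simp only [hu'_def]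
      field_simp
    have hubd : ∀ g, ‖u g‖ ≤ (Real.sqrt x₀)⁻¹ := by
      intro g
      rw [hu_def]
      simp only [norm_mul]
      rw [Real.norm_eq_abs (Real.sqrt x₀)⁻¹, abs_of_pos (by positivity)]
      apply mul_le_of_le_one_left (by positivity)
      rw [Real.norm_eq_abs, abs_div, abs_of_pos (by positivity : (0:ℝ) < Real.cosh (s g) ^ 3),
        div_le_one (by positivity)]
      rw [abs_neg]
      exact (abs_sinh_le_cosh _).trans (le_self_pow₀ (Real.one_le_cosh _) (by norm_num))
    have hu'bd : ∀ g, ‖u' g‖ ≤ 5 := by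
      intro g
      rw [hu'_def]
      have h1 := sech_norm_le (s g) 2
      have h2 := sech_norm_le (s g) 4
      rw [Real.norm_eq_abs] at *
      calc |2 * ((Real.cosh (s g)) ^ 2)⁻¹ - 3 * ((Real.cosh (s g)) ^ 4)⁻¹|
          ≤ |2 * ((Real.cosh (s g)) ^ 2)⁻¹| + |3 * ((Real.cosh (s g)) ^ 4)⁻¹| := abs_sub _ _
        _ ≤ 2 * 1 + 3 * 1 := by
            rw [abs_mul, abs_mul]
            gcongr <;> simp [abs_two]
        _ = 5 := by norm_num
    have hucont : Continuous u := by
      apply Continuous.mul _ continuous_const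
      apply Continuous.div (by fun_prop) (by fun_prop)
      intro g
      positivity
    have hu'cont : Continuous u' := by
      apply Continuous.sub
      · exact continuous_const.mul (cont_sech b (Real.sqrt x₀) 2)
      · exact continuous_const.mul (cont_sech b (Real.sqrt x₀) 4)
    have hmulint : Integrable (fun g => -g * skP g) := by
      have := skP_mul_integrable.neg
      refine this.congr (Filter.Eventually.of_forall fun g => by simp)
    have h1 : Integrable (u * fun g => -g * skP g) :=
      hmulint.bdd_mul hucont.aestronglyMeasurable (Filter.Eventually.of_forall hubd)
    have h2 : Integrable (u' * skP) :=
      skP_integrable.bdd_mul hu'cont.aestronglyMeasurable (Filter.Eventually.of_forall hu'bd)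
    have h3 : Integrable (u * skP) :=
      skP_integrable.bdd_mul hucont.aestronglyMeasurable (Filter.Eventually.of_forall hubd)
    have hibp := integral_mul_deriv_eq_deriv_mul_of_integrable (fun g _ => hu' g) (fun g _ => skP_hasDerivAt g) h1 h2 h3
    -- hibp : ∫ u g * (-g * skP g) = - ∫ u' g * skP g
    have step1 : (∫ g, F' x₀ g ∂γ) = ∫ g, u g * g * skP g := by
      rw [hγ, sk_integral_eq]
      congr 1
      funext g
      rw [hF', hu_def]
      have : Real.sqrt x₀ ≠ 0 := hsx.ne'
      field_simp
      ring
    have step2 : (∫ g, u g * g * skP g) = ∫ g, u' g * skP g := by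
      have : (∫ g, u g * (-g * skP g)) = ∫ g, -(u g * g * skP g) := by
        congr 1
        funext g
        ring
      rw [this, integral_neg] at hibp
      have := neg_injective hibp
      linarith [this]
    have step3 : (∫ g, u' g * skP g) = ∫ g, u' g ∂γ := (sk_integral_eq u').symm
    have step4 : (∫ g, u' g ∂γ)
        = 2 * (∫ g, ((Real.cosh (s g)) ^ 2)⁻¹ ∂γ) - 3 * (∫ g, ((Real.cosh (s g)) ^ 4)⁻¹ ∂γ) := by
      rw [hu'_def]
      rw [integral_sub, integral_const_mul, integral_const_mul]
      · exact (sk_integrable_of_bound _ 1 (cont_sech b (Real.sqrt x₀) 2)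
          fun g => sech_norm_le _ 2).const_mul 2
      · exact (sk_integrable_of_bound _ 1 (cont_sech b (Real.sqrt x₀) 4)
          fun g => sech_norm_le _ 4).const_mul 3
    rw [step1, step2, step3, step4]
  rw [hval] at hderiv
  exact hderiv

/-- **No crossing of replica-symmetric Sherrington–Kirkpatrick characteristics.**
Let `b ∈ ℝ`, `t ≥ 0`, and let `I ⊆ (0, ∞)` be an interval on which
`t E_g[cosh⁻⁴(b + g√x₀)] ≤ 1/3 + (2/3) t E_g[cosh⁻²(b + g√x₀)]` (expectations over a
standard Gaussian `g`).  Then `f(x₀) = x₀ - t E_g[tanh²(b + g√x₀)]` is nondecreasing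
on `I`; in particular the replica-symmetric characteristics starting from distinct
points of `I` do not intersect at time `t`. -/
theorem sk_rs_characteristics_no_crossing (b t : ℝ) (ht : 0 ≤ t)
    (I : Set ℝ) (hI : I ⊆ Set.Ioi 0) (hconn : I.OrdConnected)
    (hcond : ∀ x₀ ∈ I,
      t * ∫ g : ℝ, ((Real.cosh (b + g * Real.sqrt x₀)) ^ 4)⁻¹ ∂(gaussianReal 0 1)
        ≤ 1 / 3 +
          (2 / 3) * t *
            ∫ g : ℝ, ((Real.cosh (b + g * Real.sqrt x₀)) ^ 2)⁻¹ ∂(gaussianReal 0 1)) :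
    MonotoneOn
      (fun x₀ : ℝ =>
        x₀ - t * ∫ g : ℝ, (Real.tanh (b + g * Real.sqrt x₀)) ^ 2 ∂(gaussianReal 0 1))
      I := by
  have hrw : (fun x₀ : ℝ =>
        x₀ - t * ∫ g : ℝ, (Real.tanh (b + g * Real.sqrt x₀)) ^ 2 ∂(gaussianReal 0 1))
      = fun x₀ : ℝ => x₀ - t
          + t * ∫ g : ℝ, ((Real.cosh (b + g * Real.sqrt x₀)) ^ 2)⁻¹ ∂(gaussianReal 0 1) := by
    funext x
    have hpt : ∀ g : ℝ, (Real.tanh (b + g * Real.sqrt x)) ^ 2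
        = 1 - ((Real.cosh (b + g * Real.sqrt x)) ^ 2)⁻¹ := by
      intro g
      set u := b + g * Real.sqrt x
      have hc : Real.cosh u ≠ 0 := (Real.cosh_pos u).ne'
      have hs : Real.sinh u ^ 2 = Real.cosh u ^ 2 - 1 := by
        nlinarith [Real.cosh_sq_sub_sinh_sq u]
      rw [Real.tanh_eq_sinh_div_cosh, div_pow, hs]
      field_simp
    have h2 : (∫ g : ℝ, (Real.tanh (b + g * Real.sqrt x)) ^ 2 ∂(gaussianReal 0 1))
        = ∫ g : ℝ, (1 - ((Real.cosh (b + g * Real.sqrt x)) ^ 2)⁻¹) ∂(gaussianReal 0 1) :=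
      integral_congr_ae (Filter.Eventually.of_forall hpt)
    rw [h2, integral_sub (integrable_const 1)
      (sk_integrable_of_bound _ 1 (cont_sech b _ 2) fun g => sech_norm_le _ 2)]
    simp only [integral_const, measure_univ, ENNReal.toReal_one, probReal_univ, smul_eq_mul, one_mul]
    ring
  rw [hrw]
  have hconv : Convex ℝ I := convex_iff_ordConnected.mpr hconn
  have hD : ∀ x ∈ I, HasDerivAt
      (fun x₀ : ℝ => x₀ - t
          + t * ∫ g : ℝ, ((Real.cosh (b + g * Real.sqrt x₀)) ^ 2)⁻¹ ∂(gaussianReal 0 1))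
      (1 + t * (2 * (∫ g, ((Real.cosh (b + g * Real.sqrt x)) ^ 2)⁻¹ ∂(gaussianReal 0 1))
        - 3 * (∫ g, ((Real.cosh (b + g * Real.sqrt x)) ^ 4)⁻¹ ∂(gaussianReal 0 1)))) x := by
    intro x hx
    exact ((hasDerivAt_id x).sub_const t).add ((sk_hasDerivAt b x (hI hx)).const_mul t)
  refine monotoneOn_of_hasDerivWithinAt_nonneg hconv
    (fun x hx => ((hD x hx).continuousAt).continuousWithinAt)
    (f' := fun x =>
      1 + t * (2 * (∫ g, ((Real.cosh (b + g * Real.sqrt x)) ^ 2)⁻¹ ∂(gaussianReal 0 1))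
        - 3 * (∫ g, ((Real.cosh (b + g * Real.sqrt x)) ^ 4)⁻¹ ∂(gaussianReal 0 1))))
    (fun x hx => (hD x (interior_subset hx)).hasDerivWithinAt) ?_
  intro x hx
  have hc := hcond x (interior_subset hx)
  nlinarith [hc]
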